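/- Let G and H be finite connected simple graphs with at least two vertices each. Then gon(G □ H) ≤ ⌊(g(G □ H) + 3)/2⌋, where g denotes the genus of the graph. -/

import Mathlib

open Finset
open scoped Classical

namespace SimpleGraph

variable {V : Type*}

/-- A divisor `D : V → ℤ` is effective if all its values are nonnegative. -/
def Effective (D : V → ℤ) : Prop := ∀ v, 0 ≤ D v

/-- The Laplacian of `G` applied to `x : V → ℤ`:
`(lap G x) v = deg(v)·x(v) − ∑_{u ~ v} x(u) = ∑_{u ~ v} (x v − x u)`. -/
noncomputable def lap [Fintype V] (G : SimpleGraph V) (x : V → ℤ) : V → ℤ :=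
  fun v => ∑ u, if G.Adj v u then x v - x u else 0

/-- Two divisors are (linearly) equivalent if they differ by a Laplacian image. -/
def LinEquiv [Fintype V] (G : SimpleGraph V) (D D' : V → ℤ) : Prop :=
  ∃ x : V → ℤ, D - D' = G.lap x

/-- A divisor has positive rank if for every vertex `v`, subtracting one chip at `v`
yields a divisor equivalent to an effective divisor. -/
def PosRank [Fintype V] (G : SimpleGraph V) (D : V → ℤ) : Prop :=
  ∀ v : V, ∃ E : V → ℤ, Effective E ∧
    G.LinEquiv (D - fun u => if u = v then (1 : ℤ) else 0) E

/-- The gonality of `G`: the minimum degree of an effective divisor of positive rank. -/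
noncomputable def gonality [Fintype V] (G : SimpleGraph V) : ℕ :=
  sInf {n : ℕ | ∃ D : V → ℤ, Effective D ∧ G.PosRank D ∧ (∑ v, D v) = (n : ℤ)}

/-- The genus of `G`: `|E| − |V| + 1`. -/
noncomputable def genus [Fintype V] (G : SimpleGraph V) : ℤ :=
  (Nat.card G.edgeSet : ℤ) - (Fintype.card V : ℤ) + 1

end SimpleGraph

open SimpleGraph

section Lap
variable {V : Type*} [Fintype V] (G : SimpleGraph V)

lemma lap_add (x y : V → ℤ) : G.lap (x + y) = G.lap x + G.lap y := by
  funext v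
  simp only [lap, Pi.add_apply]
  rw [← Finset.sum_add_distrib]
  congr 1; funext u
  by_cases h : G.Adj v u <;> simp [h] <;> ring

lemma lap_neg (x : V → ℤ) : G.lap (-x) = - G.lap x := by
  funext v
  simp only [lap, Pi.neg_apply]
  rw [← Finset.sum_neg_distrib]
  congr 1; funext u
  by_cases h : G.Adj v u <;> simp [h] <;> ring

lemma lap_smul (c : ℤ) (x : V → ℤ) : G.lap (c • x) = c • G.lap x := by
  funext v
  simp only [lap, Pi.smul_apply, smul_eq_mul]
  rw [Finset.mul_sum]
  congr 1; funext u
  by_cases h : G.Adj v u <;> simp [h] <;> ring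

lemma lap_sum {ι : Type*} (s : Finset ι) (f : ι → V → ℤ) :
    G.lap (∑ i ∈ s, f i) = ∑ i ∈ s, G.lap (f i) := by
  classical
  induction s using Finset.induction with
  | empty =>
      funext v; simp [lap]
  | insert _ _ h ih =>
      rw [Finset.sum_insert h, Finset.sum_insert h, lap_add, ih]

/-- sum over a subset: interior terms cancel, leaving the cut. -/
lemma sum_lap_cut (x : V → ℤ) (S : Finset V) :
    ∑ v ∈ S, G.lap x v = ∑ v ∈ S, ∑ u ∈ Sᶜ, (if G.Adj v u then x v - x u else 0) := by
  have huniv : ∀ v, G.lap x v = (∑ u ∈ S, (if G.Adj v u then x v - x u else 0))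
      + ∑ u ∈ Sᶜ, (if G.Adj v u then x v - x u else 0) := by
    intro v
    rw [lap, ← Finset.sum_add_sum_compl S]
  have hcancel : ∑ v ∈ S, ∑ u ∈ S, (if G.Adj v u then x v - x u else 0) = 0 := by
    have : ∀ v ∈ S, ∀ u ∈ S, (if G.Adj v u then x v - x u else 0)
        = (if G.Adj v u then x v else 0) - (if G.Adj u v then x u else 0) := by
      intro v _ u _
      have hiff : G.Adj v u ↔ G.Adj u v := ⟨fun h => h.symm, fun h => h.symm⟩
      by_cases h : G.Adj v u
      · simp [h, hiff.mp h]
      · have h2 : ¬ G.Adj u v := fun hh => h (hiff.mpr hh)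
        simp [h, h2]
    rw [Finset.sum_congr rfl (fun v hv => Finset.sum_congr rfl (this v hv))]
    simp only [Finset.sum_sub_distrib]
    rw [Finset.sum_comm (s := S) (t := S) (f := fun u v => if G.Adj u v then x u else 0)]
    simp
  calc ∑ v ∈ S, G.lap x v
      = ∑ v ∈ S, ((∑ u ∈ S, (if G.Adj v u then x v - x u else 0))
        + ∑ u ∈ Sᶜ, (if G.Adj v u then x v - x u else 0)) := by
        exact Finset.sum_congr rfl fun v _ => huniv v
    _ = _ := by rw [Finset.sum_add_distrib, hcancel, zero_add]

lemma sum_lap (x : V → ℤ) : ∑ v, G.lap x v = 0 := by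
  have := sum_lap_cut G x Finset.univ
  simpa using this

end Lap

section QLap
variable {V : Type*} [Fintype V] (G : SimpleGraph V)

noncomputable def lapQ : (V → ℚ) →ₗ[ℚ] (V → ℚ) where
  toFun x := fun v => ∑ u, if G.Adj v u then x v - x u else 0
  map_add' x y := by
    funext v
    simp only [Pi.add_apply]
    rw [← Finset.sum_add_distrib]
    congr 1; funext u
    by_cases h : G.Adj v u <;> simp [h] <;> ring
  map_smul' c x := by
    funext v
    simp only [Pi.smul_apply, smul_eq_mul, RingHom.id_apply]
    rw [Finset.mul_sum]
    congr 1; funext u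
    by_cases h : G.Adj v u <;> simp [h] <;> ring

noncomputable def sumL : (V → ℚ) →ₗ[ℚ] ℚ where
  toFun x := ∑ v, x v
  map_add' x y := Finset.sum_add_distrib
  map_smul' c x := by simp [Finset.mul_sum]

lemma sum_lapQ (x : V → ℚ) : ∑ v, lapQ G x v = 0 := by
  have key : ∀ v u : V, (if G.Adj v u then x v - x u else 0)
      = (if G.Adj v u then x v else 0) - (if G.Adj u v then x u else 0) := by
    intro v u
    have hiff : G.Adj v u ↔ G.Adj u v := ⟨fun h => h.symm, fun h => h.symm⟩
    by_cases h : G.Adj v u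
    · simp [h, hiff.mp h]
    · have h2 : ¬ G.Adj u v := fun hh => h (hiff.mpr hh)
      simp [h, h2]
  show ∑ v, ∑ u, (if G.Adj v u then x v - x u else 0) = 0
  rw [Finset.sum_congr rfl (fun v _ => Finset.sum_congr rfl (fun u _ => key v u))]
  simp only [Finset.sum_sub_distrib]
  rw [Finset.sum_comm (f := fun u v => if G.Adj u v then x u else 0)]
  simp

lemma range_lapQ_le : LinearMap.range (lapQ G) ≤ LinearMap.ker (sumL (V := V)) := by
  rintro y ⟨x, rfl⟩
  exact sum_lapQ G x

lemma ker_lapQ_const (hG : G.Connected) (x : V → ℚ) (hx : lapQ G x = 0) :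
    ∀ v w : V, x v = x w := by
  haveI : Nonempty V := hG.nonempty
  obtain ⟨a, -, ha⟩ := Finset.exists_max_image Finset.univ x ⟨Classical.arbitrary V, Finset.mem_univ _⟩
  have hmax : ∀ u, x u ≤ x a := fun u => ha u (Finset.mem_univ u)
  have step : ∀ u w, G.Adj u w → x u = x a → x w = x a := by
    intro u w hadj hu
    have h0 : ∑ t, (if G.Adj u t then x u - x t else 0) = 0 := congrFun hx u
    have hnn : ∀ t ∈ Finset.univ, (0:ℚ) ≤ (if G.Adj u t then x u - x t else 0) := by
      intro t _
      by_cases h : G.Adj u t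
      · simp only [h, if_true]
        have := hmax t
        rw [hu]; linarith
      · simp [h]
    have := (Finset.sum_eq_zero_iff_of_nonneg hnn).mp h0 w (Finset.mem_univ w)
    rw [if_pos hadj] at this
    have : x u = x w := by linarith
    rw [← this, hu]
  have walk : ∀ {u v : V} (_ : G.Walk u v), x u = x a → x v = x a := by
    intro u v p
    induction p with
    | nil => exact id
    | cons hadj p ih => exact fun hu => ih (step _ _ hadj hu)
  have all : ∀ v, x v = x a := fun v => walk ((hG.preconnected a v).some) rfl
  intro v w; rw [all v, all w]

lemma range_lapQ (hG : G.Connected) :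
    LinearMap.range (lapQ G) = LinearMap.ker (sumL (V := V)) := by
  haveI : Nonempty V := hG.nonempty
  have hker : LinearMap.ker (lapQ G) = Submodule.span ℚ {(fun _ => 1 : V → ℚ)} := by
    apply le_antisymm
    · intro x hx
      have := ker_lapQ_const G hG x hx
      have : x = x (Classical.arbitrary V) • (fun _ => 1 : V → ℚ) := by
        funext v; simp [this v (Classical.arbitrary V)]
      rw [this]
      exact Submodule.smul_mem _ _ (Submodule.mem_span_singleton_self _)
    · rw [Submodule.span_singleton_le_iff_mem]
      show lapQ G (fun _ => 1) = 0
      funext v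
      show ∑ u, (if G.Adj v u then (1:ℚ) - 1 else 0) = 0
      simp
  have h1 : Module.finrank ℚ (LinearMap.ker (lapQ G)) = 1 := by
    rw [hker]
    refine finrank_span_singleton ?_
    intro h
    have := congrFun h (Classical.arbitrary V)
    simpa using this
  have hrank : Module.finrank ℚ (LinearMap.range (lapQ G)) + 1 = Fintype.card V := by
    have := LinearMap.finrank_range_add_finrank_ker (lapQ G)
    rw [h1] at this
    simpa [Module.finrank_pi] using this
  have hsurj : LinearMap.range (sumL (V := V)) = ⊤ := by
    rw [LinearMap.range_eq_top]
    intro c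
    refine ⟨fun v => if v = Classical.arbitrary V then c else 0, ?_⟩
    simp [sumL]
  have h2 : Module.finrank ℚ (LinearMap.ker (sumL (V := V))) + 1 = Fintype.card V := by
    have := LinearMap.finrank_range_add_finrank_ker (sumL (V := V))
    rw [hsurj] at this
    rw [add_comm]
    simpa [Module.finrank_pi, finrank_top] using this
  exact Submodule.eq_of_le_of_finrank_le (range_lapQ_le G) (by omega)

end QLap

section IntMultiple
variable {V : Type*} [Fintype V] (G : SimpleGraph V)

lemma lap_cast (x : V → ℤ) (v : V) :
    ((G.lap x v : ℤ) : ℚ) = lapQ G (fun u => (x u : ℚ)) v := by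
  show ((∑ u, if G.Adj v u then x v - x u else 0 : ℤ) : ℚ) = _
  push_cast
  rfl

lemma exists_int_multiple (hG : G.Connected) (f : V → ℤ) (hf : ∑ v, f v = 0) :
    ∃ (k : ℤ) (x : V → ℤ), 0 < k ∧ ∀ v, G.lap x v = k * f v := by
  have hfQ : (fun v => (f v : ℚ)) ∈ LinearMap.ker (sumL (V := V)) := by
    show ∑ v, (f v : ℚ) = 0
    have h0 : ((∑ v, f v : ℤ) : ℚ) = 0 := by rw [hf]; rfl
    push_cast at h0
    exact h0
  rw [← range_lapQ G hG] at hfQ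
  obtain ⟨y, hy⟩ := hfQ
  set N : ℕ := ∏ v, (y v).den with hNdef
  have hNpos : 0 < N := Finset.prod_pos (fun v _ => (y v).pos)
  have hint : ∀ v, ∃ m : ℤ, (m : ℚ) = (N : ℚ) * y v := by
    intro v
    obtain ⟨c, hc⟩ := Finset.dvd_prod_of_mem (fun v => ((y v).den : ℕ)) (Finset.mem_univ v)
    refine ⟨c * (y v).num, ?_⟩
    have hyv : ((y v).num : ℚ) = y v * ((y v).den : ℚ) := by
      rw [mul_comm]
      exact_mod_cast (Rat.den_mul_eq_num (y v)).symm
    have h1 : ((N : ℕ) : ℚ) = ((y v).den : ℚ) * (c : ℚ) := by exact_mod_cast hc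
    rw [h1]
    push_cast
    rw [hyv]
    ring
  choose x hx using hint
  refine ⟨(N : ℤ), x, by exact_mod_cast hNpos, fun v => ?_⟩
  have : ((G.lap x v : ℤ) : ℚ) = ((N : ℤ) * f v : ℤ) := by
    rw [lap_cast]
    have hxy : (fun u => (x u : ℚ)) = (N : ℚ) • y := by
      funext u; simp [hx u]
    rw [hxy, map_smul]
    have := congrFun hy v
    simp only [Pi.smul_apply, smul_eq_mul, this]
    push_cast
    ring
  exact_mod_cast this

end IntMultiple

section OffQ
variable {V : Type*} [Fintype V] (G : SimpleGraph V)

lemma exists_equiv_nonneg_off (hG : G.Connected) (q : V) (D : V → ℤ) :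
    ∃ E : V → ℤ, G.LinEquiv D E ∧ ∀ v, v ≠ q → 0 ≤ E v := by
  set f : V → V → ℤ :=
    fun v u => (if u = v then 1 else 0) - (if u = q then 1 else 0) with hf
  have hsum : ∀ v, ∑ u, f v u = 0 := by
    intro v
    simp [hf, Finset.sum_sub_distrib]
  choose k x hk hx using fun v => exists_int_multiple G hG (f v) (hsum v)
  set t : V → ℤ := fun v => max 0 (-D v) with ht
  set xx : V → ℤ := ∑ v ∈ Finset.univ.erase q, t v • x v with hxx
  refine ⟨D + G.lap xx, ⟨-xx, by rw [lap_neg]; funext u; simp⟩, ?_⟩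
  intro u hu
  have hlap : G.lap xx u = t u * k u := by
    rw [hxx, lap_sum]
    have : ∀ v ∈ Finset.univ.erase q, G.lap (t v • x v) u
        = t v * k v * (f v u) := by
      intro v _
      rw [lap_smul]
      simp only [Pi.smul_apply, smul_eq_mul, hx v u]
      ring
    rw [Finset.sum_apply, Finset.sum_congr rfl this]
    have hfvu : ∀ v, f v u = if u = v then 1 else 0 := by
      intro v
      simp [hf, hu]
    simp only [hfvu]
    rw [Finset.sum_eq_single u]
    · simp
    · intro v _ hvu
      have : ¬ (u = v) := fun h => hvu h.symm
      simp [this]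
    · intro habs
      exact absurd (Finset.mem_erase.mpr ⟨hu, Finset.mem_univ u⟩) habs
  have htnn : 0 ≤ t u := le_max_left _ _
  have h1k : 1 ≤ k u := hk u
  have : t u ≤ t u * k u := le_mul_of_one_le_right htnn h1k
  have hDt : 0 ≤ D u + t u := by
    rw [ht]
    simp only
    rcases le_total 0 (-D u) with h | h
    · rw [max_eq_right h]; omega
    · rw [max_eq_left h]; omega
  simp only [Pi.add_apply, hlap]
  omega

end OffQ

section Reduced
variable {V : Type*} [Fintype V] (G : SimpleGraph V)

/-- adjacency indicator, ℤ-valued -/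
noncomputable def adjInd : V → V → ℤ := fun v u => if G.Adj v u then 1 else 0

lemma adjInd_nonneg (v u : V) : 0 ≤ adjInd G v u := by
  unfold adjInd; split <;> omega

lemma adjInd_symm (v u : V) : adjInd G v u = adjInd G u v := by
  unfold adjInd
  by_cases h : G.Adj v u
  · simp [h, h.symm]
  · have h2 : ¬ G.Adj u v := fun hh => h hh.symm
    simp [h, h2]

lemma adjInd_self (v : V) : adjInd G v v = 0 := by
  simp [adjInd]

/-- number of edges from `v` out of `S` -/
noncomputable def outdeg (S : Finset V) (v : V) : ℤ := ∑ u ∈ Sᶜ, adjInd G v u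

lemma exists_adj_out (hG : G.Connected) (S : Finset V) (hS : S.Nonempty)
    (q : V) (hq : q ∉ S) : ∃ v ∈ S, ∃ u, u ∉ S ∧ G.Adj v u := by
  obtain ⟨v0, hv0⟩ := hS
  have walk : ∀ {a b : V} (_ : G.Walk a b), a ∈ S → b ∉ S →
      ∃ v ∈ S, ∃ u, u ∉ S ∧ G.Adj v u := by
    intro a b p
    induction p with
    | nil => intro ha hb; exact absurd ha hb
    | @cons a c b hadj p ih =>
        intro ha _hb
        by_cases hc : c ∈ S
        · exact ih hc _hb
        · exact ⟨a, ha, c, hc, hadj⟩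
  exact walk ((hG.preconnected v0 q).some) hv0 hq

lemma lap_indicator_mem (S : Finset V) (v : V) (hv : v ∈ S) :
    G.lap (fun u => if u ∈ S then (1:ℤ) else 0) v = outdeg G S v := by
  show ∑ u, (if G.Adj v u then (if v ∈ S then (1:ℤ) else 0) - (if u ∈ S then 1 else 0) else 0) = _
  rw [← Finset.sum_add_sum_compl S]
  have h1 : ∀ u ∈ S, (if G.Adj v u then (if v ∈ S then (1:ℤ) else 0) - (if u ∈ S then 1 else 0) else 0) = 0 := by
    intro u hu; simp [hv, hu]
  have h2 : ∀ u ∈ Sᶜ, (if G.Adj v u then (if v ∈ S then (1:ℤ) else 0) - (if u ∈ S then 1 else 0) else 0) = adjInd G v u := by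
    intro u hu
    rw [Finset.mem_compl] at hu
    simp [hv, hu, adjInd]
  rw [Finset.sum_congr rfl h1, Finset.sum_congr rfl h2]
  simp [outdeg]

lemma lap_indicator_not_mem (S : Finset V) (v : V) (hv : v ∉ S) :
    G.lap (fun u => if u ∈ S then (1:ℤ) else 0) v ≤ 0 := by
  show ∑ u, (if G.Adj v u then (if v ∈ S then (1:ℤ) else 0) - (if u ∈ S then 1 else 0) else 0) ≤ 0
  apply Finset.sum_nonpos
  intro u _
  by_cases h : G.Adj v u
  · by_cases hu : u ∈ S <;> simp [h, hv, hu]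
  · simp [h]

variable {G}

/-- The peeling lemma. -/
lemma peeling (F : V → ℤ) (q : V)
    (hred : ∀ S : Finset V, S.Nonempty → q ∉ S → ∃ v ∈ S, F v + 1 ≤ outdeg G S v) :
    ∀ S : Finset V, q ∉ S →
      2 * ∑ v ∈ S, F v + 2 * S.card ≤ (∑ v ∈ S, ∑ u ∈ S, adjInd G v u) + 2 * ∑ v ∈ S, outdeg G S v := by
  intro S
  induction S using Finset.strongInduction with
  | _ S ih =>
    intro hq
    rcases S.eq_empty_or_nonempty with rfl | hSne
    · simp
    obtain ⟨v, hvS, hv⟩ := hred S hSne hq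
    set S' := S.erase v with hS'
    have hq' : q ∉ S' := fun h => hq (Finset.mem_of_mem_erase h)
    have hsub : S' ⊂ S := Finset.erase_ssubset hvS
    have IH := ih S' hsub hq'
    have hcard : (S.card : ℤ) = S'.card + 1 := by
      rw [hS', Finset.card_erase_of_mem hvS]
      have : 1 ≤ S.card := Finset.card_pos.mpr hSne
      push_cast
      omega
    set c : ℤ := ∑ u ∈ S', adjInd G v u with hc
    -- identity 1 : e2 S = e2 S' + 2c
    have hid1 : ∑ w ∈ S, ∑ u ∈ S, adjInd G w u
        = (∑ w ∈ S', ∑ u ∈ S', adjInd G w u) + 2 * c := by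
      have hrow : ∀ w, ∑ u ∈ S, adjInd G w u = adjInd G w v + ∑ u ∈ S', adjInd G w u := by
        intro w
        rw [hS', Finset.add_sum_erase _ _ hvS]
      rw [← Finset.add_sum_erase _ _ hvS, ← hS']
      rw [hrow v, Finset.sum_congr rfl (fun w _ => hrow w)]
      rw [Finset.sum_add_distrib]
      have : ∑ w ∈ S', adjInd G w v = c := by
        rw [hc]; exact Finset.sum_congr rfl (fun w _ => adjInd_symm G w v)
      rw [this, adjInd_self]
      ring
    -- identity 2 : bd S = bd S' - c + outdeg S v
    have hcomp : ∀ w, outdeg G S' w = outdeg G S w + adjInd G w v := by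
      intro w
      unfold outdeg
      rw [hS', Finset.compl_erase, Finset.sum_insert (by simp [hvS])]
      ring
    have hid2 : ∑ w ∈ S, outdeg G S w
        = (∑ w ∈ S', outdeg G S' w) - c + outdeg G S v := by
      rw [← Finset.add_sum_erase _ _ hvS, ← hS']
      have : ∑ w ∈ S', outdeg G S w = ∑ w ∈ S', outdeg G S' w - c := by
        rw [Finset.sum_congr rfl (fun w _ => hcomp w), Finset.sum_add_distrib, hc]
        have : ∑ w ∈ S', adjInd G w v = ∑ w ∈ S', adjInd G v w :=
          Finset.sum_congr rfl (fun w _ => adjInd_symm G w v)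
        rw [this]
        ring
      rw [this]
      ring
    have hsumS : ∑ w ∈ S, F w = F v + ∑ w ∈ S', F w := by
      rw [hS', Finset.add_sum_erase _ _ hvS]
    rw [hid1, hid2, hsumS, hcard]
    omega

end Reduced

section Main
variable {V : Type*} [Fintype V] (G : SimpleGraph V)

lemma lap_zero : G.lap (fun _ => 0) = fun _ => 0 := by
  funext v; simp [lap]

lemma linEquiv_trans {D E F : V → ℤ} (h1 : G.LinEquiv D E) (h2 : G.LinEquiv E F) :
    G.LinEquiv D F := by
  obtain ⟨x, hx⟩ := h1
  obtain ⟨y, hy⟩ := h2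
  refine ⟨x + y, ?_⟩
  rw [lap_add, ← hx, ← hy]
  abel

lemma linEquiv_sum_eq {D E : V → ℤ} (h : G.LinEquiv D E) : ∑ v, D v = ∑ v, E v := by
  obtain ⟨x, hx⟩ := h
  have h0 : ∑ v, (D v - E v) = 0 := by
    calc ∑ v, (D v - E v) = ∑ v, G.lap x v :=
          Finset.sum_congr rfl (fun v _ => congrFun hx v)
      _ = 0 := sum_lap G x
  rw [Finset.sum_sub_distrib] at h0
  omega

lemma sum_adjInd : ∑ v, ∑ u, adjInd G v u = 2 * (Nat.card G.edgeSet : ℤ) := by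
  have hdeg : ∀ v, ∑ u, adjInd G v u = (G.degree v : ℤ) := by
    intro v
    unfold adjInd
    rw [Finset.sum_boole]
    rw [degree, neighborFinset_eq_filter]
  rw [Finset.sum_congr rfl (fun v _ => hdeg v), ← Nat.cast_sum]
  rw [sum_degrees_eq_twice_card_edges]
  have : Nat.card G.edgeSet = G.edgeFinset.card := by
    rw [Nat.card_coe_set_eq, Set.ncard_eq_toFinset_card']
    congr 1
  rw [this]
  push_cast
  ring

/-- Key structural result: every divisor is equivalent to a `q`-reduced one. -/
lemma exists_reduced (hG : G.Connected) (q : V) (D : V → ℤ) :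
    ∃ E : V → ℤ, G.LinEquiv D E ∧ (∀ v, v ≠ q → 0 ≤ E v) ∧
      ∀ S : Finset V, S.Nonempty → q ∉ S → ∃ v ∈ S, E v + 1 ≤ outdeg G S v := by
  obtain ⟨E0, hDE0, hE0⟩ := exists_equiv_nonneg_off G hG q D
  set B : ℤ := ∑ v ∈ Finset.univ.erase q, E0 v with hB
  have hBnn : 0 ≤ B :=
    Finset.sum_nonneg (fun v hv => hE0 v (Finset.ne_of_mem_erase hv))
  set Pred : (V → ℤ) → Prop :=
    fun x => (∀ v, 0 ≤ x v) ∧ x q = 0 ∧ ∀ v, v ≠ q → G.lap x v ≤ E0 v with hPred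
  have hcut : ∀ x, Pred x → ∀ S : Finset V, q ∉ S → ∑ v ∈ S, G.lap x v ≤ B := by
    intro x hx S hqS
    have h1 : ∑ v ∈ S, G.lap x v ≤ ∑ v ∈ S, E0 v :=
      Finset.sum_le_sum (fun v hv => hx.2.2 v (fun h => hqS (h ▸ hv)))
    have h2 : ∑ v ∈ S, E0 v ≤ B := by
      apply Finset.sum_le_sum_of_subset_of_nonneg
      · intro v hv
        exact Finset.mem_erase.mpr ⟨fun h => hqS (h ▸ hv), Finset.mem_univ v⟩
      · intro v hv _
        exact hE0 v (Finset.ne_of_mem_erase hv)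
    omega
  have hdiff : ∀ x, Pred x → ∀ a b, G.Adj a b → x a ≤ x b + B := by
    intro x hx a b hadj
    rcases le_or_gt (x a) (x b) with h | h
    · omega
    set S : Finset V := Finset.univ.filter (fun t => x b + 1 ≤ x t) with hS
    have haS : a ∈ S := by
      rw [hS, Finset.mem_filter]
      exact ⟨Finset.mem_univ a, by omega⟩
    have hqS : q ∉ S := by
      rw [hS, Finset.mem_filter]
      rintro ⟨-, habs⟩
      have := hx.1 b
      rw [hx.2.1] at habs
      omega
    have hbS : b ∈ Sᶜ := by
      rw [Finset.mem_compl, hS, Finset.mem_filter]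
      rintro ⟨-, habs⟩; omega
    have hcb := hcut x hx S hqS
    rw [sum_lap_cut] at hcb
    have hterm : ∀ v ∈ S, ∀ u ∈ Sᶜ, (0:ℤ) ≤ (if G.Adj v u then x v - x u else 0) := by
      intro v hv u hu
      rw [hS, Finset.mem_filter] at hv
      rw [Finset.mem_compl, hS, Finset.mem_filter] at hu
      by_cases hvu : G.Adj v u
      · rw [if_pos hvu]
        have : ¬ (x b + 1 ≤ x u) := fun hh => hu ⟨Finset.mem_univ u, hh⟩
        omega
      · rw [if_neg hvu]
    have hinner : x a - x b ≤ ∑ u ∈ Sᶜ, (if G.Adj a u then x a - x u else 0) := by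
      have h := Finset.single_le_sum (f := fun u => if G.Adj a u then x a - x u else 0)
        (fun u hu => hterm a haS u hu) hbS
      simp only [if_pos hadj] at h
      exact h
    have houter : ∑ u ∈ Sᶜ, (if G.Adj a u then x a - x u else 0)
        ≤ ∑ v ∈ S, ∑ u ∈ Sᶜ, (if G.Adj v u then x v - x u else 0) := by
      exact Finset.single_le_sum
        (f := fun v => ∑ u ∈ Sᶜ, (if G.Adj v u then x v - x u else 0))
        (fun v hv => Finset.sum_nonneg (fun u hu => hterm v hv u hu)) haS
    omega
  have hwalk : ∀ x, Pred x → ∀ {a b : V} (p : G.Walk a b),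
      x b ≤ x a + (p.length : ℤ) * B := by
    intro x hx a b p
    induction p with
    | nil => simp
    | @cons a c b hadj p ih =>
        have h1 := hdiff x hx c a hadj.symm
        have h2 : ((SimpleGraph.Walk.cons hadj p).length : ℤ) = (p.length : ℤ) + 1 := by
          rw [SimpleGraph.Walk.length_cons]; push_cast; ring
        rw [h2]
        have hB2 : (p.length : ℤ) * B ≥ 0 := mul_nonneg (by positivity) hBnn
        nlinarith [ih]
  have hM : ∀ x, Pred x → ∑ v, x v ≤ ∑ v, (((hG.preconnected q v).some.length : ℤ) * B) := by
    intro x hx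
    apply Finset.sum_le_sum
    intro v _
    have := hwalk x hx ((hG.preconnected q v).some)
    rw [hx.2.1] at this
    omega
  obtain ⟨s, ⟨xs, hxs, hsum⟩, hmax⟩ := Int.exists_greatest_of_bdd
    (P := fun s => ∃ x, Pred x ∧ ∑ v, x v = s)
    ⟨∑ v, (((hG.preconnected q v).some.length : ℤ) * B), fun z ⟨x, hx, hxz⟩ => hxz ▸ hM x hx⟩
    ⟨0, (fun _ => 0), ⟨fun v => le_refl 0, rfl, fun v hv => by
        rw [lap_zero]; exact hE0 v hv⟩, by simp⟩
  refine ⟨fun v => E0 v - G.lap xs v, ?_, ?_, ?_⟩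
  · refine linEquiv_trans G hDE0 ⟨xs, ?_⟩
    funext v; simp
  · intro v hv
    have h := hxs.2.2 v hv
    show 0 ≤ E0 v - G.lap xs v
    omega
  · intro S hSne hqS
    by_contra habs
    push_neg at habs
    set x' : V → ℤ := xs + (fun u => if u ∈ S then 1 else 0) with hx'
    have hx'Pred : Pred x' := by
      refine ⟨fun v => ?_, ?_, fun v hv => ?_⟩
      · have := hxs.1 v
        rw [hx']
        simp only [Pi.add_apply]
        split <;> omega
      · rw [hx']
        simp only [Pi.add_apply, hxs.2.1]
        rw [if_neg hqS]
        omega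
      · rw [hx', lap_add]
        simp only [Pi.add_apply]
        by_cases hvS : v ∈ S
        · have h1 := lap_indicator_mem G S v hvS
          have h2 := habs v hvS
          omega
        · have h1 := lap_indicator_not_mem G S v hvS
          have h2 := hxs.2.2 v hv
          omega
    have hsum' : ∑ v, x' v = s + S.card := by
      rw [hx']
      simp only [Pi.add_apply]
      rw [Finset.sum_add_distrib, hsum]
      congr 1
      rw [Finset.sum_boole]
      simp [Finset.filter_mem_eq_inter]
    have := hmax (s + S.card) ⟨x', hx'Pred, hsum'⟩
    have hcard : 0 < S.card := Finset.card_pos.mpr hSne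
    omega

end Main

section Genus
variable {V : Type*} [Fintype V] (G : SimpleGraph V)

lemma erase_identity (q : V) :
    (∑ v ∈ Finset.univ.erase q, ∑ u ∈ Finset.univ.erase q, adjInd G v u)
      + 2 * ∑ v ∈ Finset.univ.erase q, outdeg G (Finset.univ.erase q) v
      = ∑ v, ∑ u, adjInd G v u := by
  set S' : Finset V := Finset.univ.erase q with hS'
  have hcompl : S'ᶜ = {q} := by
    rw [hS', Finset.compl_erase]
    simp
  have hout : ∀ w, outdeg G S' w = adjInd G w q := by
    intro w
    unfold outdeg
    rw [hcompl, Finset.sum_singleton]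
  have hd : ∑ w ∈ S', outdeg G S' w = ∑ w ∈ S', adjInd G q w := by
    rw [Finset.sum_congr rfl (fun w _ => hout w)]
    exact Finset.sum_congr rfl (fun w _ => adjInd_symm G w q)
  have hqmem : q ∈ (Finset.univ : Finset V) := Finset.mem_univ q
  have hrow : ∀ w, ∑ u, adjInd G w u = adjInd G w q + ∑ u ∈ S', adjInd G w u := by
    intro w
    rw [hS', Finset.add_sum_erase _ _ hqmem]
  calc (∑ v ∈ S', ∑ u ∈ S', adjInd G v u) + 2 * ∑ v ∈ S', outdeg G S' v
      = (∑ v ∈ S', ∑ u ∈ S', adjInd G v u) + (∑ w ∈ S', adjInd G q w)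
        + (∑ w ∈ S', adjInd G w q) := by
        rw [hd]
        have : ∑ w ∈ S', adjInd G w q = ∑ w ∈ S', adjInd G q w :=
          Finset.sum_congr rfl (fun w _ => adjInd_symm G w q)
        rw [this]; ring
    _ = ∑ v, ∑ u, adjInd G v u := by
        rw [← Finset.add_sum_erase _ _ hqmem, ← hS', hrow q, adjInd_self]
        rw [Finset.sum_congr rfl (fun w (_ : w ∈ S') => hrow w), Finset.sum_add_distrib]
        ring

lemma peel_total (q : V) (F : V → ℤ)
    (hred : ∀ S : Finset V, S.Nonempty → q ∉ S → ∃ v ∈ S, F v + 1 ≤ outdeg G S v) :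
    2 * ∑ v ∈ Finset.univ.erase q, F v + 2 * ((Fintype.card V : ℤ) - 1)
      ≤ 2 * (Nat.card G.edgeSet : ℤ) := by
  have hq : q ∉ Finset.univ.erase q := fun h => (Finset.mem_erase.mp h).1 rfl
  have := peeling F q hred (Finset.univ.erase q) hq
  rw [erase_identity G q] at this
  rw [sum_adjInd G] at this
  have hcard : ((Finset.univ.erase q).card : ℤ) = (Fintype.card V : ℤ) - 1 := by
    rw [Finset.card_erase_of_mem (Finset.mem_univ q), Finset.card_univ]
    have : 1 ≤ Fintype.card V := Fintype.card_pos_iff.mpr ⟨q⟩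
    push_cast
    omega
  omega

lemma genus_nonneg (hG : G.Connected) : 0 ≤ G.genus := by
  haveI : Nonempty V := hG.nonempty
  set q := Classical.arbitrary V
  have hred : ∀ S : Finset V, S.Nonempty → q ∉ S →
      ∃ v ∈ S, (fun _ => (0:ℤ)) v + 1 ≤ outdeg G S v := by
    intro S hS hq
    obtain ⟨v, hvS, u, huS, hadj⟩ := exists_adj_out G hG S hS q hq
    refine ⟨v, hvS, ?_⟩
    have hu : u ∈ Sᶜ := Finset.mem_compl.mpr huS
    have h1 := Finset.single_le_sum (f := adjInd G v)
      (fun u _ => adjInd_nonneg G v u) hu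
    have h2 : adjInd G v u = 1 := by simp [adjInd, hadj]
    unfold outdeg
    simp only [zero_add]
    omega
  have := peel_total G q (fun _ => 0) hred
  simp only [Finset.sum_const_zero, mul_zero, zero_add] at this
  unfold SimpleGraph.genus
  omega

theorem exists_effective_equiv (hG : G.Connected) (D : V → ℤ)
    (hdeg : G.genus ≤ ∑ v, D v) : ∃ E : V → ℤ, Effective E ∧ G.LinEquiv D E := by
  haveI : Nonempty V := hG.nonempty
  set q := Classical.arbitrary V
  obtain ⟨E, hDE, hnn, hred⟩ := exists_reduced G hG q D
  have hpeel := peel_total G q E hred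
  have hsumeq : ∑ v, D v = ∑ v, E v := linEquiv_sum_eq G hDE
  have hsplit : ∑ v ∈ Finset.univ.erase q, E v + E q = ∑ v, E v :=
    Finset.sum_erase_add _ _ (Finset.mem_univ q)
  have hEq : 0 ≤ E q := by
    unfold SimpleGraph.genus at hdeg
    omega
  refine ⟨E, ?_, hDE⟩
  intro v
  by_cases hv : v = q
  · rw [hv]; exact hEq
  · exact hnn v hv

end Genus

section PosRankDivisor
variable {V : Type*} [Fintype V] (G : SimpleGraph V)

theorem exists_posrank_divisor (hG : G.Connected) :
    ∃ D : V → ℤ, Effective D ∧ G.PosRank D ∧ ∑ v, D v = G.genus + 1 := by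
  haveI : Nonempty V := hG.nonempty
  set q := Classical.arbitrary V
  have hgen := genus_nonneg G hG
  refine ⟨fun v => if v = q then G.genus + 1 else 0, ?_, ?_, ?_⟩
  · intro v
    show 0 ≤ if v = q then G.genus + 1 else 0
    split <;> omega
  · intro v
    apply exists_effective_equiv G hG
    have h1 : ∑ u, ((fun u => if u = q then G.genus + 1 else 0) - fun u => if u = v then (1:ℤ) else 0) u
        = (G.genus + 1) - 1 := by
      simp only [Pi.sub_apply]
      rw [Finset.sum_sub_distrib]
      rw [Fintype.sum_ite_eq' q (fun _ => G.genus + 1), Fintype.sum_ite_eq' v (fun _ => (1:ℤ))]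
    rw [h1]
    omega
  · rw [Fintype.sum_ite_eq' q (fun _ => G.genus + 1)]

end PosRankDivisor

section Product
variable {V W : Type*} [Fintype V] [Fintype W] (G : SimpleGraph V) (H : SimpleGraph W)

lemma lap_boxProd_snd (x : W → ℤ) (p : V × W) :
    (G □ H).lap (fun r => x r.2) p = H.lap x p.2 := by
  obtain ⟨a, b⟩ := p
  show ∑ u : V × W, (if (G □ H).Adj (a, b) u then x b - x u.2 else 0) = _
  rw [Fintype.sum_prod_type]
  have key : ∀ (u1 : V) (u2 : W), (if (G □ H).Adj (a, b) (u1, u2) then x b - x u2 else 0)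
      = if u1 = a then (if H.Adj b u2 then x b - x u2 else 0) else 0 := by
    intro u1 u2
    by_cases h1 : u1 = a
    · subst h1
      rw [if_pos rfl]
      by_cases h2 : H.Adj b u2
      · have hadj : (G □ H).Adj (u1, b) (u1, u2) :=
          SimpleGraph.boxProd_adj.mpr (Or.inr ⟨h2, rfl⟩)
        rw [if_pos hadj, if_pos h2]
      · rw [if_neg, if_neg h2]
        intro hadj
        rcases SimpleGraph.boxProd_adj.mp hadj with ⟨hg, _⟩ | ⟨hh, _⟩
        · exact G.irrefl hg
        · exact h2 hh
    · rw [if_neg h1]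
      by_cases h2 : (G □ H).Adj (a, b) (u1, u2)
      · rcases SimpleGraph.boxProd_adj.mp h2 with ⟨_, hbu⟩ | ⟨_, hau⟩
        · rw [if_pos h2]
          simp only at hbu
          rw [← hbu, sub_self]
        · exact absurd hau.symm h1
      · rw [if_neg h2]
  rw [Finset.sum_congr rfl (fun u1 _ => Finset.sum_congr rfl (fun u2 _ => key u1 u2))]
  rw [Finset.sum_comm]
  show ∑ u2 : W, ∑ u1 : V, (if u1 = a then (if H.Adj b u2 then x b - x u2 else 0) else 0) = _
  have : ∀ u2 : W, ∑ u1 : V, (if u1 = a then (if H.Adj b u2 then x b - x u2 else 0) else 0)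
      = (if H.Adj b u2 then x b - x u2 else 0) :=
    fun u2 => Fintype.sum_ite_eq' a _
  rw [Finset.sum_congr rfl (fun u2 _ => this u2)]
  rfl

lemma lap_boxProd_fst (x : V → ℤ) (p : V × W) :
    (G □ H).lap (fun r => x r.1) p = G.lap x p.1 := by
  obtain ⟨a, b⟩ := p
  show ∑ u : V × W, (if (G □ H).Adj (a, b) u then x a - x u.1 else 0) = _
  rw [Fintype.sum_prod_type]
  have key : ∀ (u1 : V) (u2 : W), (if (G □ H).Adj (a, b) (u1, u2) then x a - x u1 else 0)
      = if u2 = b then (if G.Adj a u1 then x a - x u1 else 0) else 0 := by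
    intro u1 u2
    by_cases h1 : u2 = b
    · subst h1
      by_cases h2 : G.Adj a u1
      · have hadj : (G □ H).Adj (a, u2) (u1, u2) :=
          SimpleGraph.boxProd_adj.mpr (Or.inl ⟨h2, rfl⟩)
        rw [if_pos hadj, if_pos rfl, if_pos h2]
      · rw [if_pos rfl, if_neg, if_neg h2]
        intro hadj
        rcases SimpleGraph.boxProd_adj.mp hadj with ⟨hg, _⟩ | ⟨hh, _⟩
        · exact h2 hg
        · exact H.irrefl hh
    · by_cases h2 : (G □ H).Adj (a, b) (u1, u2)
      · rcases SimpleGraph.boxProd_adj.mp h2 with ⟨_, hbu⟩ | ⟨hh, hau⟩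
        · exact absurd hbu.symm h1
        · rw [if_pos h2, if_neg h1]
          simp only at hau
          rw [hau, sub_self]
      · rw [if_neg h2, if_neg h1]
  rw [Finset.sum_congr rfl (fun u1 _ => Finset.sum_congr rfl (fun u2 _ => key u1 u2))]
  have : ∀ u1 : V, ∑ u2 : W, (if u2 = b then (if G.Adj a u1 then x a - x u1 else 0) else 0)
      = (if G.Adj a u1 then x a - x u1 else 0) :=
    fun u1 => Fintype.sum_ite_eq' b _
  rw [Finset.sum_congr rfl (fun u1 _ => this u1)]
  rfl

end Product

section Product2
variable {V W : Type*} [Fintype V] [Fintype W] (G : SimpleGraph V) (H : SimpleGraph W)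

lemma gonality_le_pullback_snd (dH : W → ℤ) (hEff : Effective dH) (hPos : H.PosRank dH)
    (n : ℕ) (hn : ∑ w, dH w = (n : ℤ)) :
    (G □ H).gonality ≤ Fintype.card V * n := by
  apply Nat.sInf_le
  refine ⟨fun p => dH p.2, fun p => hEff p.2, ?_, ?_⟩
  · rintro ⟨v0, w0⟩
    obtain ⟨EH, hEH, xH, hxH⟩ := hPos w0
    refine ⟨fun p => EH p.2 + (if p.2 = w0 then 1 else 0) - (if p = (v0, w0) then 1 else 0),
      ?_, fun p => xH p.2, ?_⟩
    · rintro ⟨a, b⟩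
      show 0 ≤ EH b + (if b = w0 then 1 else 0) - (if (a, b) = (v0, w0) then 1 else 0)
      by_cases hp : (a, b) = (v0, w0)
      · have hb : b = w0 := congrArg Prod.snd hp
        rw [if_pos hp, if_pos hb]
        have := hEH b
        omega
      · rw [if_neg hp]
        have := hEH b
        by_cases hb : b = w0
        · rw [if_pos hb]; omega
        · rw [if_neg hb]; omega
    · funext p
      rw [lap_boxProd_snd]
      have hh := congrFun hxH p.2
      simp only [Pi.sub_apply] at hh ⊢
      by_cases hp : p = (v0, w0)
      · have hw : p.2 = w0 := by rw [hp]
        rw [if_pos hp, if_pos hp, if_pos hw]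
        rw [if_pos hw] at hh
        linarith
      · rw [if_neg hp, if_neg hp]
        by_cases hw : p.2 = w0
        · rw [if_pos hw]
          rw [if_pos hw] at hh
          linarith
        · rw [if_neg hw]
          rw [if_neg hw] at hh
          linarith
  · rw [Fintype.sum_prod_type]
    rw [Finset.sum_congr rfl (fun a (_ : a ∈ Finset.univ) => hn)]
    rw [Finset.sum_const, Finset.card_univ]
    push_cast
    ring

lemma gonality_le_pullback_fst (dG : V → ℤ) (hEff : Effective dG) (hPos : G.PosRank dG)
    (n : ℕ) (hn : ∑ v, dG v = (n : ℤ)) :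
    (G □ H).gonality ≤ Fintype.card W * n := by
  apply Nat.sInf_le
  refine ⟨fun p => dG p.1, fun p => hEff p.1, ?_, ?_⟩
  · rintro ⟨v0, w0⟩
    obtain ⟨EG, hEG, xG, hxG⟩ := hPos v0
    refine ⟨fun p => EG p.1 + (if p.1 = v0 then 1 else 0) - (if p = (v0, w0) then 1 else 0),
      ?_, fun p => xG p.1, ?_⟩
    · rintro ⟨a, b⟩
      show 0 ≤ EG a + (if a = v0 then 1 else 0) - (if (a, b) = (v0, w0) then 1 else 0)
      by_cases hp : (a, b) = (v0, w0)
      · have ha : a = v0 := congrArg Prod.fst hp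
        rw [if_pos hp, if_pos ha]
        have := hEG a
        omega
      · rw [if_neg hp]
        have := hEG a
        by_cases ha : a = v0
        · rw [if_pos ha]; omega
        · rw [if_neg ha]; omega
    · funext p
      rw [lap_boxProd_fst]
      have hh := congrFun hxG p.1
      simp only [Pi.sub_apply] at hh ⊢
      by_cases hp : p = (v0, w0)
      · have hv : p.1 = v0 := by rw [hp]
        rw [if_pos hp, if_pos hp, if_pos hv]
        rw [if_pos hv] at hh
        linarith
      · rw [if_neg hp, if_neg hp]
        by_cases hv : p.1 = v0
        · rw [if_pos hv]
          rw [if_pos hv] at hh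
          linarith
        · rw [if_neg hv]
          rw [if_neg hv] at hh
          linarith
  · rw [Fintype.sum_prod_type]
    have : ∀ a : V, ∑ _b : W, dG a = (Fintype.card W : ℤ) * dG a := by
      intro a
      rw [Finset.sum_const, Finset.card_univ]
      push_cast
      ring
    rw [Finset.sum_congr rfl (fun a (_ : a ∈ Finset.univ) => this a)]
    rw [← Finset.mul_sum, hn]
    push_cast
    ring

lemma sum_adjInd_box :
    ∑ p : V × W, ∑ u : V × W, adjInd (G □ H) p u
      = (Fintype.card W : ℤ) * (∑ v, ∑ u, adjInd G v u)
        + (Fintype.card V : ℤ) * (∑ w, ∑ u, adjInd H w u) := by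
  have key : ∀ (a : V) (b : W) (c : V) (d : W),
      adjInd (G □ H) (a, b) (c, d)
        = (if G.Adj a c ∧ b = d then (1:ℤ) else 0) + (if H.Adj b d ∧ a = c then (1:ℤ) else 0) := by
    intro a b c d
    unfold adjInd
    by_cases h1 : G.Adj a c ∧ b = d
    · have hne : ¬ (H.Adj b d ∧ a = c) := by
        rintro ⟨hh, rfl⟩
        rw [h1.2] at hh
        exact H.irrefl hh
      rw [if_pos h1, if_neg hne, if_pos (SimpleGraph.boxProd_adj.mpr (Or.inl h1))]
      norm_num
    · by_cases h2 : H.Adj b d ∧ a = c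
      · rw [if_neg h1, if_pos h2, if_pos (SimpleGraph.boxProd_adj.mpr (Or.inr h2))]
        norm_num
      · rw [if_neg h1, if_neg h2, if_neg]
        · ring
        · intro hadj
          rcases SimpleGraph.boxProd_adj.mp hadj with h | h
          · exact h1 h
          · exact h2 h
  have expand : ∑ p : V × W, ∑ u : V × W, adjInd (G □ H) p u
      = ∑ a : V, ∑ b : W, ∑ c : V, ∑ d : W,
          ((if G.Adj a c ∧ b = d then (1:ℤ) else 0) + (if H.Adj b d ∧ a = c then (1:ℤ) else 0)) := by
    rw [Fintype.sum_prod_type]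
    apply Finset.sum_congr rfl; intro a _
    apply Finset.sum_congr rfl; intro b _
    rw [Fintype.sum_prod_type]
    apply Finset.sum_congr rfl; intro c _
    apply Finset.sum_congr rfl; intro d _
    exact key a b c d
  rw [expand]
  simp only [Finset.sum_add_distrib]
  congr 1
  · -- G-part
    have h1 : ∀ (a : V) (b : W) (c : V), ∑ d : W, (if G.Adj a c ∧ b = d then (1:ℤ) else 0)
        = if G.Adj a c then 1 else 0 := by
      intro a b c
      by_cases h : G.Adj a c
      · simp [h]
      · simp [h]
    simp only [h1]
    have h2 : ∀ a : V, ∑ b : W, ∑ c : V, (if G.Adj a c then (1:ℤ) else 0)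
        = (Fintype.card W : ℤ) * ∑ c : V, (if G.Adj a c then (1:ℤ) else 0) := by
      intro a
      rw [Finset.sum_const, Finset.card_univ, nsmul_eq_mul]
    rw [Finset.sum_congr rfl (fun a (_ : a ∈ Finset.univ) => h2 a)]
    rw [← Finset.mul_sum]
    rfl
  · -- H-part
    have h1 : ∀ (a : V) (b : W) (d : W), ∑ c : V, (if H.Adj b d ∧ a = c then (1:ℤ) else 0)
        = if H.Adj b d then 1 else 0 := by
      intro a b d
      by_cases h : H.Adj b d
      · simp [h]
      · simp [h]
    have hswap : ∀ (a : V) (b : W), ∑ c : V, ∑ d : W, (if H.Adj b d ∧ a = c then (1:ℤ) else 0)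
        = ∑ d : W, (if H.Adj b d then (1:ℤ) else 0) := by
      intro a b
      rw [Finset.sum_comm]
      exact Finset.sum_congr rfl (fun d _ => h1 a b d)
    rw [Finset.sum_congr rfl (fun a (_ : a ∈ Finset.univ) =>
      Finset.sum_congr rfl (fun b (_ : b ∈ Finset.univ) => hswap a b))]
    rw [Finset.sum_const, Finset.card_univ, nsmul_eq_mul]
    rfl

end Product2

theorem gonality_boxProd_le_genus {V W : Type*} [Fintype V] [Fintype W]
    (G : SimpleGraph V) (H : SimpleGraph W) (hG : G.Connected) (hH : H.Connected)
    (hV : 2 ≤ Fintype.card V) (hW : 2 ≤ Fintype.card W) :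
    ((G □ H).gonality : ℤ) ≤ ((G □ H).genus + 3) / 2 := by
  set a : ℤ := (Fintype.card V : ℤ) with ha
  set b : ℤ := (Fintype.card W : ℤ) with hb
  have ha2 : 2 ≤ a := by rw [ha]; exact_mod_cast hV
  have hb2 : 2 ≤ b := by rw [hb]; exact_mod_cast hW
  -- divisors
  obtain ⟨dG, hdGe, hdGp, hdGs⟩ := exists_posrank_divisor G hG
  obtain ⟨dH, hdHe, hdHp, hdHs⟩ := exists_posrank_divisor H hH
  have hgG : 0 ≤ G.genus := genus_nonneg G hG
  have hgH : 0 ≤ H.genus := genus_nonneg H hH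
  set nG : ℕ := (G.genus + 1).toNat with hnG
  set nH : ℕ := (H.genus + 1).toNat with hnH
  have hnGc : (nG : ℤ) = G.genus + 1 := Int.toNat_of_nonneg (by omega)
  have hnHc : (nH : ℤ) = H.genus + 1 := Int.toNat_of_nonneg (by omega)
  have h1 : (G □ H).gonality ≤ Fintype.card V * nH :=
    gonality_le_pullback_snd G H dH hdHe hdHp nH (by rw [hdHs, hnHc])
  have h2 : (G □ H).gonality ≤ Fintype.card W * nG :=
    gonality_le_pullback_fst G H dG hdGe hdGp nG (by rw [hdGs, hnGc])
  have h1' : ((G □ H).gonality : ℤ) ≤ a * (H.genus + 1) := by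
    rw [← hnHc]
    calc ((G □ H).gonality : ℤ) ≤ ((Fintype.card V * nH : ℕ) : ℤ) := by exact_mod_cast h1
      _ = a * nH := by push_cast; ring
  have h2' : ((G □ H).gonality : ℤ) ≤ b * (G.genus + 1) := by
    rw [← hnGc]
    calc ((G □ H).gonality : ℤ) ≤ ((Fintype.card W * nG : ℕ) : ℤ) := by exact_mod_cast h2
      _ = b * nG := by push_cast; ring
  -- edge counts
  set mG : ℤ := (Nat.card G.edgeSet : ℤ) with hmG
  set mH : ℤ := (Nat.card H.edgeSet : ℤ) with hmH
  set mP : ℤ := (Nat.card (G □ H).edgeSet : ℤ) with hmP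
  have hedge : 2 * mP = b * (2 * mG) + a * (2 * mH) := by
    rw [hmP, ← sum_adjInd (G □ H), hmG, ← sum_adjInd G, hmH, ← sum_adjInd H]
    exact sum_adjInd_box G H
  have hgenG : G.genus = mG - a + 1 := by rw [SimpleGraph.genus]
  have hgenH : H.genus = mH - b + 1 := by rw [SimpleGraph.genus]
  have hgenP : (G □ H).genus = mP - a * b + 1 := by
    rw [SimpleGraph.genus, hmP]
    congr 1
    rw [Fintype.card_prod]
    push_cast
    ring
  -- arithmetic
  have hkey : 2 * ((G □ H).gonality : ℤ) ≤ (G □ H).genus + 3 := by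
    have hsum : 2 * ((G □ H).gonality : ℤ) ≤ a * (H.genus + 1) + b * (G.genus + 1) := by
      linarith
    have hprod : 0 ≤ (a - 2) * (b - 2) := mul_nonneg (by omega) (by omega)
    rw [hgenP]
    rw [hgenG, hgenH] at hsum
    nlinarith [hsum, hedge, hprod]
  rw [Int.le_ediv_iff_mul_le (by norm_num : (0:ℤ) < 2)]
  linarith
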